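/- Let d ∈ ℕ with d ≥ 2. There exist matrices W₁, …, W_{d−1} ∈ ℝ^{1×d}, each with spectral norm ‖W_ℓ‖₂ ≤ 1, such that, defining Φ_ℓ : ℝ^d → ℝ^d by Φ_ℓ(x) = x − 2 W_ℓᵀ ReLU(W_ℓ x), one has e₁ᵀ (Φ_{d−1} ∘ ⋯ ∘ Φ₁)(x) = max{x₁, …, x_d} for all x ∈ ℝ^d, where e₁ is the first canonical basis vector. Likewise there exists such a choice realizing min{x₁, …, x_d}. In particular, the functions x ↦ max{x₁,…,x_d} and x ↦ min{x₁,…,x_d} belong to G_{d,σ}(ℝ^d,ℝ) with σ = ReLU. -/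

import Mathlib

open scoped BigOperators

noncomputable section

def relu (t : ℝ) : ℝ := max t 0

def entrywise {n : ℕ} (σ : ℝ → ℝ) (x : EuclideanSpace ℝ (Fin n)) : EuclideanSpace ℝ (Fin n) :=
  WithLp.toLp 2 (fun i : Fin n => σ (x i))

def matVec {k h : ℕ} (W : Matrix (Fin k) (Fin h) ℝ) (x : EuclideanSpace ℝ (Fin h)) :
    EuclideanSpace ℝ (Fin k) :=
  Matrix.toEuclideanLin W x

/-- Spectral norm of a real matrix, as the operator norm between Euclidean spaces. -/
def specNorm {k h : ℕ} (W : Matrix (Fin k) (Fin h) ℝ) : ℝ :=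
  ‖LinearMap.toContinuousLinearMap (Matrix.toEuclideanLin W)‖

/-- Membership in `E_{h,σ}` with `σ = ReLU`. -/
def IsEulerStep {h : ℕ} (Φ : EuclideanSpace ℝ (Fin h) → EuclideanSpace ℝ (Fin h)) : Prop :=
  ∃ (k : ℕ) (W : Matrix (Fin k) (Fin h) ℝ) (b : EuclideanSpace ℝ (Fin k)) (τ : ℝ),
    0 ≤ τ ∧ τ ≤ 2 ∧ specNorm W ≤ 1 ∧
    ∀ x, Φ x = x - τ • matVec W.transpose (entrywise relu (matVec W x + b))

def compChain {α : Type*} : (L : ℕ) → (Fin L → α → α) → α → α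
  | 0, _, x => x
  | L + 1, Φ, x => Φ (Fin.last L) (compChain L (fun i => Φ i.castSucc) x)

/-- Membership in `G_{d,σ}(X,ℝ)` with `σ = ReLU`. -/
def InG {d : ℕ} (X : Set (EuclideanSpace ℝ (Fin d))) (g : EuclideanSpace ℝ (Fin d) → ℝ) : Prop :=
  LipschitzOnWith 1 g X ∧
  ∃ (h L : ℕ) (Qhat : Matrix (Fin h) (Fin d) ℝ) (qhat : EuclideanSpace ℝ (Fin h))
    (Φ : Fin L → (EuclideanSpace ℝ (Fin h) → EuclideanSpace ℝ (Fin h)))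
    (v : EuclideanSpace ℝ (Fin h)),
    (∀ ℓ, IsEulerStep (Φ ℓ)) ∧ ‖v‖ = 1 ∧
    ∀ x ∈ X, g x = ∑ i, v i * compChain L Φ (matVec Qhat x + qhat) i

section Aux
open scoped RealInnerProductSpace

lemma matVec_apply {k h : ℕ} (W : Matrix (Fin k) (Fin h) ℝ) (x : EuclideanSpace ℝ (Fin h))
    (i : Fin k) : matVec W x i = ∑ j, W i j * x j := rfl

lemma sum_two {d : ℕ} {j z : Fin d} (hjz : j ≠ z) (f : Fin d → ℝ)
    (hf : ∀ i, i ≠ j → i ≠ z → f i = 0) : ∑ i, f i = f j + f z := by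
  rw [← Finset.sum_pair hjz]
  refine (Finset.sum_subset (Finset.subset_univ _) ?_).symm
  intro i _ hi
  simp only [Finset.mem_insert, Finset.mem_singleton, not_or] at hi
  exact hf i hi.1 hi.2

lemma specNorm_le_one_of_row {h : ℕ} (W : Matrix (Fin 1) (Fin h) ℝ)
    (hrow : ∑ j, (W 0 j)^2 ≤ 1) : specNorm W ≤ 1 := by
  apply ContinuousLinearMap.opNorm_le_bound _ zero_le_one
  intro x
  rw [one_mul]
  have hval : ∀ y : EuclideanSpace ℝ (Fin 1), ‖y‖ = |y 0| := by
    intro y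
    rw [EuclideanSpace.norm_eq]
    simp [Real.sqrt_sq_eq_abs]
  have h1 : (LinearMap.toContinuousLinearMap (Matrix.toEuclideanLin W)) x = matVec W x := rfl
  rw [h1, hval]
  set w : EuclideanSpace ℝ (Fin h) := WithLp.toLp 2 (fun j => W 0 j) with hw
  have hinner : matVec W x 0 = ⟪w, x⟫ := by
    rw [matVec_apply, PiLp.inner_apply]
    simp [RCLike.inner_apply, hw, mul_comm]
  rw [hinner]
  calc |⟪w, x⟫| ≤ ‖w‖ * ‖x‖ := abs_real_inner_le_norm w x
    _ ≤ 1 * ‖x‖ := by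
        gcongr
        rw [EuclideanSpace.norm_eq]
        refine Real.sqrt_le_one.mpr ?_
        simpa [hw, sq_abs] using hrow
    _ = ‖x‖ := one_mul _



def wMat (d : ℕ) (s : ℝ) (n : ℕ) : Matrix (Fin 1) (Fin d) ℝ :=
  fun _ j => if (j : ℕ) = n + 1 then s / Real.sqrt 2 else if (j : ℕ) = 0 then -(s / Real.sqrt 2) else 0

lemma wMat_top {d : ℕ} (s : ℝ) (n : ℕ) {i : Fin d} (hi : (i : ℕ) = n + 1) :
    wMat d s n 0 i = s / Real.sqrt 2 := by simp [wMat, hi]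

lemma wMat_zero {d : ℕ} (s : ℝ) (n : ℕ) {i : Fin d} (hi : (i : ℕ) = 0) :
    wMat d s n 0 i = -(s / Real.sqrt 2) := by
  simp [wMat, hi, show ¬ (0 : ℕ) = n + 1 by omega]

lemma wMat_other {d : ℕ} (s : ℝ) (n : ℕ) {i : Fin d} (hi1 : (i : ℕ) ≠ n + 1)
    (hi2 : (i : ℕ) ≠ 0) : wMat d s n 0 i = 0 := by
  simp only [wMat, if_neg hi1, if_neg hi2]

lemma spec_wMat (d n : ℕ) (hn : n + 1 < d) (s : ℝ) (hs : s ^ 2 = 1) :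
    specNorm (wMat d s n) ≤ 1 := by
  apply specNorm_le_one_of_row
  have h0 : (0 : ℕ) < d := by omega
  have hne : (⟨n+1, hn⟩ : Fin d) ≠ ⟨0, h0⟩ := by simp [Fin.ext_iff]
  rw [sum_two hne (fun j => (wMat d s n 0 j) ^ 2)
    (fun i hi1 hi2 => by
      show wMat d s n 0 i ^ 2 = 0
      rw [wMat_other s n (fun h => hi1 (Fin.ext h)) (fun h => hi2 (Fin.ext h))]
      ring)]
  rw [wMat_top s n rfl, wMat_zero s n rfl, neg_sq, div_pow,
    Real.sq_sqrt (by norm_num : (0:ℝ) ≤ 2), hs]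
  norm_num

lemma step_apply (d n : ℕ) (s : ℝ) (h0 : 0 < d) (hn : n + 1 < d)
    (y : EuclideanSpace ℝ (Fin d)) (i : Fin d) :
    (y - (2:ℝ) • matVec (wMat d s n).transpose (entrywise relu (matVec (wMat d s n) y))) i
    = y i - 2 * (wMat d s n 0 i * relu ((s * (y ⟨n+1, hn⟩ - y ⟨0, h0⟩)) / Real.sqrt 2)) := by
  have hne : (⟨n+1, hn⟩ : Fin d) ≠ ⟨0, h0⟩ := by simp [Fin.ext_iff]
  have ht : matVec (wMat d s n) y 0 = (s * (y ⟨n+1, hn⟩ - y ⟨0, h0⟩)) / Real.sqrt 2 := by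
    rw [matVec_apply, sum_two hne (fun j => wMat d s n 0 j * y j)
      (fun i hi1 hi2 => by
        show wMat d s n 0 i * y i = 0
        rw [wMat_other s n (fun h => hi1 (Fin.ext h)) (fun h => hi2 (Fin.ext h))]
        ring)]
    rw [wMat_top s n rfl, wMat_zero s n rfl]
    ring
  show y i - 2 * matVec (wMat d s n).transpose (entrywise relu (matVec (wMat d s n) y)) i = _
  rw [matVec_apply, Fin.sum_univ_one]
  show y i - 2 * (wMat d s n 0 i * relu (matVec (wMat d s n) y 0)) = _
  rw [ht]

lemma step_max (d n : ℕ) (h0 : 0 < d) (hn : n + 1 < d)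
    (y : EuclideanSpace ℝ (Fin d)) (i : Fin d) :
    (y - (2:ℝ) • matVec (wMat d 1 n).transpose (entrywise relu (matVec (wMat d 1 n) y))) i
    = if (i : ℕ) = 0 then max (y ⟨0, h0⟩) (y ⟨n+1, hn⟩)
      else if (i : ℕ) = n + 1 then min (y ⟨0, h0⟩) (y ⟨n+1, hn⟩)
      else y i := by
  have h2 : Real.sqrt 2 * Real.sqrt 2 = 2 := Real.mul_self_sqrt (by norm_num)
  have hs0 : Real.sqrt 2 ≠ 0 := by positivity
  rw [step_apply d n 1 h0 hn y i, one_mul]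
  set a := y ⟨0, h0⟩ with ha
  set b := y ⟨n+1, hn⟩ with hb
  by_cases hi0 : (i : ℕ) = 0
  · have hieq : y i = a := by rw [ha]; exact congrArg y.ofLp (Fin.ext hi0)
    rw [hieq, wMat_zero 1 n hi0, if_pos hi0]
    rcases le_total a b with h | h
    · rw [relu, max_eq_left (div_nonneg (sub_nonneg.2 h) (Real.sqrt_nonneg 2)),
        max_eq_right h]
      field_simp
      try nlinarith [h2]
    · rw [relu, max_eq_right (div_nonpos_of_nonpos_of_nonneg (sub_nonpos.2 h)
        (Real.sqrt_nonneg 2)), max_eq_left h]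
      ring
  · rw [if_neg hi0]
    by_cases hin : (i : ℕ) = n + 1
    · have hieq : y i = b := by rw [hb]; exact congrArg y.ofLp (Fin.ext hin)
      rw [hieq, wMat_top 1 n hin, if_pos hin]
      rcases le_total a b with h | h
      · rw [relu, max_eq_left (div_nonneg (sub_nonneg.2 h) (Real.sqrt_nonneg 2)),
          min_eq_left h]
        field_simp
        try nlinarith [h2]
      · rw [relu, max_eq_right (div_nonpos_of_nonpos_of_nonneg (sub_nonpos.2 h)
          (Real.sqrt_nonneg 2)), min_eq_right h]
        ring
    · rw [wMat_other 1 n hin hi0, if_neg hin]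
      ring

lemma step_min (d n : ℕ) (h0 : 0 < d) (hn : n + 1 < d)
    (y : EuclideanSpace ℝ (Fin d)) (i : Fin d) :
    (y - (2:ℝ) • matVec (wMat d (-1) n).transpose (entrywise relu (matVec (wMat d (-1) n) y))) i
    = if (i : ℕ) = 0 then min (y ⟨0, h0⟩) (y ⟨n+1, hn⟩)
      else if (i : ℕ) = n + 1 then max (y ⟨0, h0⟩) (y ⟨n+1, hn⟩)
      else y i := by
  have h2 : Real.sqrt 2 * Real.sqrt 2 = 2 := Real.mul_self_sqrt (by norm_num)
  have hs0 : Real.sqrt 2 ≠ 0 := by positivity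
  rw [step_apply d n (-1) h0 hn y i]
  set a := y ⟨0, h0⟩ with ha
  set b := y ⟨n+1, hn⟩ with hb
  have harg : (-1 : ℝ) * (b - a) / Real.sqrt 2 = (a - b) / Real.sqrt 2 := by ring
  rw [harg]
  by_cases hi0 : (i : ℕ) = 0
  · have hieq : y i = a := by rw [ha]; exact congrArg y.ofLp (Fin.ext hi0)
    rw [hieq, wMat_zero (-1) n hi0, if_pos hi0]
    rcases le_total a b with h | h
    · rw [relu, max_eq_right (div_nonpos_of_nonpos_of_nonneg (sub_nonpos.2 h)
        (Real.sqrt_nonneg 2)), min_eq_left h]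
      ring
    · rw [relu, max_eq_left (div_nonneg (sub_nonneg.2 h) (Real.sqrt_nonneg 2)),
        min_eq_right h]
      field_simp
      try nlinarith [h2]
  · rw [if_neg hi0]
    by_cases hin : (i : ℕ) = n + 1
    · have hieq : y i = b := by rw [hb]; exact congrArg y.ofLp (Fin.ext hin)
      rw [hieq, wMat_top (-1) n hin, if_pos hin]
      rcases le_total a b with h | h
      · rw [relu, max_eq_right (div_nonpos_of_nonpos_of_nonneg (sub_nonpos.2 h)
          (Real.sqrt_nonneg 2)), max_eq_right h]
        ring
      · rw [relu, max_eq_left (div_nonneg (sub_nonneg.2 h) (Real.sqrt_nonneg 2)),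
          max_eq_left h]
        field_simp
        try nlinarith [h2]
    · rw [wMat_other (-1) n hin hi0, if_neg hin]
      ring


def stepF (d : ℕ) (s : ℝ) (m : ℕ) (y : EuclideanSpace ℝ (Fin d)) : EuclideanSpace ℝ (Fin d) :=
  y - (2:ℝ) • matVec (wMat d s m).transpose (entrywise relu (matVec (wMat d s m) y))

lemma filter_zero (d : ℕ) (h0 : 0 < d) :
    (Finset.univ.filter (fun i : Fin d => (i : ℕ) ≤ 0)) = {(⟨0, h0⟩ : Fin d)} := by
  ext i
  simp [Fin.ext_iff]

lemma filter_nonempty (d L : ℕ) (h0 : 0 < d) :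
    (Finset.univ.filter (fun i : Fin d => (i : ℕ) ≤ L)).Nonempty :=
  ⟨⟨0, h0⟩, by simp⟩

lemma filter_succ (d L : ℕ) (hn : L + 1 < d) :
    (Finset.univ.filter (fun i : Fin d => (i : ℕ) ≤ L + 1))
      = insert (⟨L+1, hn⟩ : Fin d) (Finset.univ.filter (fun i : Fin d => (i : ℕ) ≤ L)) := by
  ext i
  simp [Fin.ext_iff]
  omega

lemma chain_max (d : ℕ) (h0 : 0 < d) (L : ℕ) (hL : L < d) (x : EuclideanSpace ℝ (Fin d)) :
    (∀ i : Fin d, L < (i : ℕ) → compChain L (fun ℓ : Fin L => stepF d 1 ℓ.val) x i = x i) ∧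
    compChain L (fun ℓ : Fin L => stepF d 1 ℓ.val) x ⟨0, h0⟩ =
      (Finset.univ.filter (fun i : Fin d => (i : ℕ) ≤ L)).sup' (filter_nonempty d L h0) x := by
  induction L with
  | zero =>
      refine ⟨fun i _ => rfl, ?_⟩
      rw [Finset.sup'_congr (filter_nonempty d 0 h0) (filter_zero d h0) (fun _ _ => rfl),
        Finset.sup'_singleton]
      rfl
  | succ L IH =>
      obtain ⟨ih1, ih2⟩ := IH (by omega)
      set c := compChain L (fun ℓ : Fin L => stepF d 1 ℓ.val) x with hc
      have hrec : compChain (L+1) (fun ℓ : Fin (L+1) => stepF d 1 ℓ.val) x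
          = stepF d 1 L c := by
        show stepF d 1 (Fin.last L).val (compChain L _ x) = _
        rfl
      have hstep := step_max d L h0 hL
      constructor
      · intro i hi
        rw [hrec]
        have := hstep c i
        rw [stepF] at *
        rw [this, if_neg (by omega), if_neg (by omega)]
        exact ih1 i (by omega)
      · rw [hrec]
        have := hstep c ⟨0, h0⟩
        rw [stepF] at *
        rw [this, if_pos rfl, ih2, ih1 ⟨L+1, hL⟩ (by exact Nat.lt_succ_self L)]
        rw [Finset.sup'_congr (filter_nonempty d (L+1) h0) (filter_succ d L hL)
          (fun _ _ => rfl), Finset.sup'_insert]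
        exact sup_comm _ _

lemma chain_min (d : ℕ) (h0 : 0 < d) (L : ℕ) (hL : L < d) (x : EuclideanSpace ℝ (Fin d)) :
    (∀ i : Fin d, L < (i : ℕ) → compChain L (fun ℓ : Fin L => stepF d (-1) ℓ.val) x i = x i) ∧
    compChain L (fun ℓ : Fin L => stepF d (-1) ℓ.val) x ⟨0, h0⟩ =
      (Finset.univ.filter (fun i : Fin d => (i : ℕ) ≤ L)).inf' (filter_nonempty d L h0) x := by
  induction L with
  | zero =>
      refine ⟨fun i _ => rfl, ?_⟩
      rw [Finset.inf'_congr (filter_nonempty d 0 h0) (filter_zero d h0) (fun _ _ => rfl),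
        Finset.inf'_singleton]
      rfl
  | succ L IH =>
      obtain ⟨ih1, ih2⟩ := IH (by omega)
      set c := compChain L (fun ℓ : Fin L => stepF d (-1) ℓ.val) x with hc
      have hrec : compChain (L+1) (fun ℓ : Fin (L+1) => stepF d (-1) ℓ.val) x
          = stepF d (-1) L c := by
        show stepF d (-1) (Fin.last L).val (compChain L _ x) = _
        rfl
      have hstep := step_min d L h0 hL
      constructor
      · intro i hi
        rw [hrec]
        have := hstep c i
        rw [stepF] at *
        rw [this, if_neg (by omega), if_neg (by omega)]
        exact ih1 i (by omega)
      · rw [hrec]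
        have := hstep c ⟨0, h0⟩
        rw [stepF] at *
        rw [this, if_pos rfl, ih2, ih1 ⟨L+1, hL⟩ (by exact Nat.lt_succ_self L)]
        rw [Finset.inf'_congr (filter_nonempty d (L+1) h0) (filter_succ d L hL)
          (fun _ _ => rfl), Finset.inf'_insert]
        exact inf_comm _ _


lemma coord_abs_le {d : ℕ} (v : EuclideanSpace ℝ (Fin d)) (i : Fin d) : |v i| ≤ ‖v‖ := by
  rw [EuclideanSpace.norm_eq]
  calc |v i| = Real.sqrt (‖v i‖ ^ 2) := by
        rw [Real.norm_eq_abs, Real.sqrt_sq (abs_nonneg _)]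
    _ ≤ _ := Real.sqrt_le_sqrt (Finset.single_le_sum
        (f := fun j => ‖v j‖ ^ 2) (fun j _ => by positivity) (Finset.mem_univ i))

lemma coord_sub_le {d : ℕ} (x y : EuclideanSpace ℝ (Fin d)) (i : Fin d) :
    |x i - y i| ≤ dist x y := by
  rw [dist_eq_norm]
  exact coord_abs_le (x - y) i

lemma lip_sup (d : ℕ) (ne : (Finset.univ : Finset (Fin d)).Nonempty) :
    LipschitzWith 1 (fun x : EuclideanSpace ℝ (Fin d) => Finset.univ.sup' ne (fun i => x i)) := by
  apply LipschitzWith.of_dist_le_mul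
  intro x y
  rw [NNReal.coe_one, one_mul, Real.dist_eq, abs_sub_le_iff]
  have key : ∀ u v : EuclideanSpace ℝ (Fin d),
      (Finset.univ.sup' ne fun i => u i) - (Finset.univ.sup' ne fun i => v i) ≤ dist u v := by
    intro u v
    rw [sub_le_iff_le_add]
    apply Finset.sup'_le
    intro i _
    have h1 := le_abs_self (u i - v i)
    have h2 := coord_sub_le u v i
    have h3 : v i ≤ Finset.univ.sup' ne fun j => v j := Finset.le_sup' _ (Finset.mem_univ i)
    linarith
  exact ⟨key x y, by rw [dist_comm] at *; exact key y x⟩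

lemma lip_inf (d : ℕ) (ne : (Finset.univ : Finset (Fin d)).Nonempty) :
    LipschitzWith 1 (fun x : EuclideanSpace ℝ (Fin d) => Finset.univ.inf' ne (fun i => x i)) := by
  apply LipschitzWith.of_dist_le_mul
  intro x y
  rw [NNReal.coe_one, one_mul, Real.dist_eq, abs_sub_le_iff]
  have key : ∀ u v : EuclideanSpace ℝ (Fin d),
      (Finset.univ.inf' ne fun i => u i) - (Finset.univ.inf' ne fun i => v i) ≤ dist u v := by
    intro u v
    obtain ⟨i, _, hi⟩ := Finset.exists_mem_eq_inf' ne (fun j => v j)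
    have h1 := le_abs_self (u i - v i)
    have h2 := coord_sub_le u v i
    have h3 : Finset.univ.inf' ne (fun j => u j) ≤ u i := Finset.inf'_le _ (Finset.mem_univ i)
    rw [hi]
    linarith
  exact ⟨key x y, by rw [dist_comm] at *; exact key y x⟩

lemma filter_univ (d : ℕ) (hd : 0 < d) :
    (Finset.univ.filter (fun i : Fin d => (i : ℕ) ≤ d - 1)) = Finset.univ := by
  ext i
  simp only [Finset.mem_filter, Finset.mem_univ, true_and, iff_true]
  have := i.isLt
  omega

lemma sum_single_mul {d : ℕ} (z : Fin d) (c : Fin d → ℝ) :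
    ∑ i, (EuclideanSpace.single z (1:ℝ)) i * c i = c z := by
  have h : ∀ i : Fin d, (EuclideanSpace.single z (1:ℝ)) i * c i
      = if i = z then c i else 0 := by
    intro i
    rw [EuclideanSpace.single_apply]
    split_ifs <;> ring
  rw [Finset.sum_congr rfl (fun i _ => h i), Finset.sum_ite_eq' Finset.univ z c,
    if_pos (Finset.mem_univ z)]


lemma matVec_one {h : ℕ} (x : EuclideanSpace ℝ (Fin h)) : matVec 1 x = x := by
  ext i
  simp [matVec_apply, Matrix.one_apply]

lemma stepF_isEuler (d : ℕ) (s : ℝ) (hs : s ^ 2 = 1) (m : ℕ) (hm : m + 1 < d) :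
    IsEulerStep (stepF d s m) := by
  refine ⟨1, wMat d s m, 0, 2, by norm_num, le_rfl, spec_wMat d m hm s hs, fun x => ?_⟩
  rw [stepF, add_zero]


end Aux


def concatE {h₁ h₂ : ℕ} (u : EuclideanSpace ℝ (Fin h₁)) (v : EuclideanSpace ℝ (Fin h₂)) :
    EuclideanSpace ℝ (Fin (h₁ + h₂)) :=
  WithLp.toLp 2 (Fin.append (fun i => u i) (fun i => v i))

/-- The residual blocks in `Ẽ_{h,σ}`: `(max{x₁,x₂}, min{x₁,x₂}, x₃, Φ'(x₄,…,x_{h+3}))`. -/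
def tildeLayer {h : ℕ} (Φ' : EuclideanSpace ℝ (Fin h) → EuclideanSpace ℝ (Fin h))
    (x : EuclideanSpace ℝ (Fin (h + 3))) : EuclideanSpace ℝ (Fin (h + 3)) :=
  WithLp.toLp 2 (fun j : Fin (h + 3) =>
    if _h0 : (j : ℕ) = 0 then max (x ⟨0, by omega⟩) (x ⟨1, by omega⟩)
    else if _h1 : (j : ℕ) = 1 then min (x ⟨0, by omega⟩) (x ⟨1, by omega⟩)
    else if _h2 : (j : ℕ) = 2 then x ⟨2, by omega⟩
    else Φ' (WithLp.toLp 2 (fun i : Fin h => x ⟨(i : ℕ) + 3, by have := i.isLt; omega⟩))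
      ⟨(j : ℕ) - 3, by have := j.isLt; omega⟩)

/-- Membership in `Ẽ_{h,σ}` with `σ = ReLU`. -/
def IsTildeLayer {h : ℕ} (Φ : EuclideanSpace ℝ (Fin (h + 3)) → EuclideanSpace ℝ (Fin (h + 3))) :
    Prop :=
  ∃ Φ', IsEulerStep Φ' ∧ ∀ x, Φ x = tildeLayer Φ' x

def emb0 {n : ℕ} : Fin 1 → Fin (n + 3) := fun _ => ⟨0, by omega⟩
def emb1 {n : ℕ} : Fin 1 → Fin (n + 3) := fun _ => ⟨1, by omega⟩
def emb2 {n : ℕ} : Fin 1 → Fin (n + 3) := fun _ => ⟨2, by omega⟩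
def embT {n : ℕ} : Fin n → Fin (n + 3) := fun i => ⟨(i : ℕ) + 3, by have := i.isLt; omega⟩

/-- Membership in `R_{d,m}` for `m = (1,1,1,n)`: each block row of the matrix has spectral
norm at most `1`. -/
def memRm {d n : ℕ} (Q : Matrix (Fin (n + 3)) (Fin d) ℝ) : Prop :=
  specNorm (Q.submatrix emb0 id) ≤ 1 ∧ specNorm (Q.submatrix emb1 id) ≤ 1 ∧
    specNorm (Q.submatrix emb2 id) ≤ 1 ∧ specNorm (Q.submatrix embT id) ≤ 1

def rowBlockSum {n r : ℕ} (A : Matrix (Fin (n + 3)) (Fin (n + 3)) ℝ)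
    (e : Fin r → Fin (n + 3)) : ℝ :=
  specNorm (A.submatrix e emb0) + specNorm (A.submatrix e emb1) +
    specNorm (A.submatrix e emb2) + specNorm (A.submatrix e embT)

/-- Membership in `L_m` for `m = (1,1,1,n)`: for each block row, the sum of the spectral
norms of the blocks is at most `1`. -/
def memLm {n : ℕ} (A : Matrix (Fin (n + 3)) (Fin (n + 3)) ℝ) : Prop :=
  rowBlockSum A emb0 ≤ 1 ∧ rowBlockSum A emb1 ≤ 1 ∧
    rowBlockSum A emb2 ≤ 1 ∧ rowBlockSum A embT ≤ 1

/-- `Φ_{L+1} ∘ A_L ∘ ⋯ ∘ Φ₂ ∘ A₁ ∘ Φ₁`, the alternating composition. -/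
def altChain {α : Type*} : (L : ℕ) → (Fin (L + 1) → α → α) → (Fin L → α → α) → α → α
  | 0, Φ, _, x => Φ 0 x
  | L + 1, Φ, A, x =>
      Φ (Fin.last (L + 1)) (A (Fin.last L)
        (altChain L (fun i => Φ i.castSucc) (fun i => A i.castSucc) x))

/-- Membership in the fixed-width class `tilde-G_{d,σ,n+3}(X,ℝ)` with `σ = ReLU`. -/
def InTildeG {d n : ℕ} (X : Set (EuclideanSpace ℝ (Fin d)))
    (g : EuclideanSpace ℝ (Fin d) → ℝ) : Prop :=
  ∃ (L : ℕ) (Qhat : Matrix (Fin (n + 3)) (Fin d) ℝ) (qhat : EuclideanSpace ℝ (Fin (n + 3)))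
    (Φ : Fin (L + 1) → (EuclideanSpace ℝ (Fin (n + 3)) → EuclideanSpace ℝ (Fin (n + 3))))
    (Ahat : Fin L → Matrix (Fin (n + 3)) (Fin (n + 3)) ℝ)
    (ahat : Fin L → EuclideanSpace ℝ (Fin (n + 3)))
    (v : EuclideanSpace ℝ (Fin (n + 3))),
    memRm Qhat ∧ (∀ ℓ, IsTildeLayer (Φ ℓ)) ∧ (∀ ℓ, memLm (Ahat ℓ)) ∧ (∑ i, |v i|) ≤ 1 ∧
    ∀ x ∈ X,
      g x = ∑ i, v i *
        altChain L Φ (fun ℓ u => matVec (Ahat ℓ) u + ahat ℓ) (matVec Qhat x + qhat) i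

end

/-- The coordinatewise maximum (and minimum) of `d ≥ 2` real numbers is
computed exactly by `d - 1` residual layers `x ↦ x - 2 Wᵀ ReLU(Wx)` with `‖W_ℓ‖₂ ≤ 1`,
reading off the first coordinate; in particular these functions belong to
`G_{d,ReLU}(ℝ^d,ℝ)`. -/
theorem stmt6 (d : ℕ) (hd : 2 ≤ d) :
    (∃ W : Fin (d - 1) → Matrix (Fin 1) (Fin d) ℝ,
      (∀ ℓ, specNorm (W ℓ) ≤ 1) ∧
      ∀ x : EuclideanSpace ℝ (Fin d),
        compChain (d - 1)
          (fun ℓ y => y - (2 : ℝ) • matVec (W ℓ).transpose (entrywise relu (matVec (W ℓ) y))) x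
            ⟨0, by omega⟩ =
          Finset.univ.sup' ⟨(⟨0, by omega⟩ : Fin d), Finset.mem_univ _⟩ (fun i => x i)) ∧
    (∃ W : Fin (d - 1) → Matrix (Fin 1) (Fin d) ℝ,
      (∀ ℓ, specNorm (W ℓ) ≤ 1) ∧
      ∀ x : EuclideanSpace ℝ (Fin d),
        compChain (d - 1)
          (fun ℓ y => y - (2 : ℝ) • matVec (W ℓ).transpose (entrywise relu (matVec (W ℓ) y))) x
            ⟨0, by omega⟩ =
          Finset.univ.inf' ⟨(⟨0, by omega⟩ : Fin d), Finset.mem_univ _⟩ (fun i => x i)) ∧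
    InG (Set.univ : Set (EuclideanSpace ℝ (Fin d)))
      (fun x => Finset.univ.sup' ⟨(⟨0, by omega⟩ : Fin d), Finset.mem_univ _⟩ (fun i => x i)) ∧
    InG (Set.univ : Set (EuclideanSpace ℝ (Fin d)))
      (fun x => Finset.univ.inf' ⟨(⟨0, by omega⟩ : Fin d), Finset.mem_univ _⟩ (fun i => x i)) := by
  have h0 : 0 < d := by omega
  have hL : d - 1 < d := by omega
  have hne : (Finset.univ : Finset (Fin d)).Nonempty := ⟨⟨0, h0⟩, Finset.mem_univ _⟩
  have hmaxchain : ∀ x : EuclideanSpace ℝ (Fin d),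
      compChain (d - 1) (fun ℓ : Fin (d-1) => stepF d 1 ℓ.val) x ⟨0, h0⟩
        = Finset.univ.sup' hne (fun i => x i) := by
    intro x
    rw [(chain_max d h0 (d - 1) hL x).2,
      Finset.sup'_congr (filter_nonempty d (d-1) h0) (filter_univ d h0) (fun _ _ => rfl)]
  have hminchain : ∀ x : EuclideanSpace ℝ (Fin d),
      compChain (d - 1) (fun ℓ : Fin (d-1) => stepF d (-1) ℓ.val) x ⟨0, h0⟩
        = Finset.univ.inf' hne (fun i => x i) := by
    intro x
    rw [(chain_min d h0 (d - 1) hL x).2,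
      Finset.inf'_congr (filter_nonempty d (d-1) h0) (filter_univ d h0) (fun _ _ => rfl)]
  refine ⟨⟨fun ℓ => wMat d 1 ℓ.val,
      fun ℓ => spec_wMat d ℓ.val (by have := ℓ.isLt; omega) 1 (one_pow 2),
      fun x => hmaxchain x⟩,
    ⟨fun ℓ => wMat d (-1) ℓ.val,
      fun ℓ => spec_wMat d ℓ.val (by have := ℓ.isLt; omega) (-1) (by norm_num),
      fun x => hminchain x⟩, ?_, ?_⟩
  · refine ⟨(lip_sup d hne).lipschitzOnWith, d, d - 1, 1, 0,
      fun ℓ : Fin (d-1) => stepF d 1 ℓ.val, EuclideanSpace.single ⟨0, h0⟩ 1,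
      fun ℓ => stepF_isEuler d 1 (one_pow 2) ℓ.val (by have := ℓ.isLt; omega),
      by rw [EuclideanSpace.norm_single, norm_one], fun x _ => ?_⟩
    rw [matVec_one, add_zero, sum_single_mul, hmaxchain x]
  · refine ⟨(lip_inf d hne).lipschitzOnWith, d, d - 1, 1, 0,
      fun ℓ : Fin (d-1) => stepF d (-1) ℓ.val, EuclideanSpace.single ⟨0, h0⟩ 1,
      fun ℓ => stepF_isEuler d (-1) (by norm_num) ℓ.val (by have := ℓ.isLt; omega),
      by rw [EuclideanSpace.norm_single, norm_one], fun x _ => ?_⟩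
    rw [matVec_one, add_zero, sum_single_mul, hminchain x]
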